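/- For each integer N ≥ 1, let X^(N) be the N×N complex matrix with entries X_{i,j} = N^(−1/2)·e[√2·i·j²], H^(N) = [[0, X^(N)],[(X^(N))*, 0]], and μ^(4)_N := (1/(2N))·Tr((H^(N))⁴). Then for every N ≥ 1, μ^(4)_N ≥ 1 + (4/(π²·N³)) · Σ_{1 ≤ j₁, j₂ ≤ N, j₁ ≠ j₂} ( ‖N·√2·(j₁² − j₂²)‖_T / ‖√2·(j₁² − j₂²)‖_T )². (The denominators are nonzero since √2 is irrational and j₁ ≠ j₂.) -/

import Mathlib

open scoped BigOperators
open MeasureTheory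

/-- `e[t] = exp(2πit)`. -/
noncomputable def expc (t : ℝ) : ℂ := Complex.exp (2 * Real.pi * Complex.I * t)

/-- `‖x‖_T`, the distance from `x` to the nearest integer. -/
noncomputable def distT (x : ℝ) : ℝ := |x - round x|

lemma expc_add (a b : ℝ) : expc (a + b) = expc a * expc b := by
  simp only [expc, ← Complex.exp_add]; push_cast; ring_nf

lemma expc_zero : expc 0 = 1 := by simp [expc]

lemma conj_expc (t : ℝ) : (starRingEnd ℂ) (expc t) = expc (-t) := by
  rw [expc, ← Complex.exp_conj]
  congr 1
  simp [Complex.ext_iff]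

lemma expc_eq (t : ℝ) : expc t = Complex.exp ((2 * Real.pi * t : ℝ) * Complex.I) := by
  rw [expc]; push_cast; ring_nf

lemma norm_expc_sub_one (t : ℝ) : ‖expc t - 1‖ = 2 * |Real.sin (Real.pi * t)| := by
  have h : expc t - 1 = Complex.exp ((Real.pi * t : ℝ) * Complex.I) *
      (2 * Complex.I * Complex.sin ((Real.pi * t : ℝ) : ℂ)) := by
    rw [Complex.sin, expc_eq]
    rw [show ((2 * Real.pi * t : ℝ) : ℂ) = ((Real.pi * t : ℝ) : ℂ) + ((Real.pi * t : ℝ) : ℂ) by push_cast; ring]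
    rw [add_mul, Complex.exp_add]
    have he : Complex.exp ((Real.pi :ℂ) * (t:ℂ) * Complex.I) * Complex.exp (-((Real.pi:ℂ) * (t:ℂ) * Complex.I)) = 1 := by
      rw [← Complex.exp_add]; simp
    field_simp
    ring_nf
    rw [Complex.I_sq]
    ring_nf
    rw [show Complex.exp (↑(Real.pi * t) * Complex.I) * Complex.exp (-(↑(Real.pi * t) * Complex.I)) = 1 by push_cast; exact he]
  rw [h]
  rw [norm_mul, Complex.norm_exp_ofReal_mul_I, one_mul, norm_mul, norm_mul]
  rw [← Complex.ofReal_sin, Complex.norm_real]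
  simp [Complex.norm_I]

lemma abs_sin_pi_sub_round (x : ℝ) :
    |Real.sin (Real.pi * (x - round x))| = |Real.sin (Real.pi * x)| := by
  rw [show Real.pi * (x - round x) = Real.pi * x - (round x : ℤ) * Real.pi by push_cast; ring]
  rw [Real.sin_sub_int_mul_pi, abs_mul]
  rcases Int.even_or_odd (round x) with h|h
  · simp [Even.neg_one_zpow h]
  · simp [Odd.neg_one_zpow h]

lemma abs_sub_round_le (x : ℝ) : |x - round x| ≤ 1/2 := abs_sub_round x

lemma two_distT_le_abs_sin (x : ℝ) : 2 * distT x ≤ |Real.sin (Real.pi * x)| := by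
  rw [← abs_sin_pi_sub_round, distT]
  have h1 : |Real.pi * (x - round x)| ≤ Real.pi / 2 := by
    rw [abs_mul, abs_of_nonneg Real.pi_pos.le]
    nlinarith [abs_sub_round x, Real.pi_pos]
  have := Real.mul_abs_le_abs_sin h1
  rw [abs_mul, abs_of_nonneg Real.pi_pos.le] at this
  have hpi := Real.pi_pos
  calc 2 * |x - round x| = 2 / Real.pi * (Real.pi * |x - round x|) := by field_simp
    _ ≤ |Real.sin (Real.pi * (x - round x))| := this

lemma abs_sin_le_pi_distT (x : ℝ) : |Real.sin (Real.pi * x)| ≤ Real.pi * distT x := by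
  rw [← abs_sin_pi_sub_round, distT]
  calc |Real.sin (Real.pi * (x - round x))| ≤ |Real.pi * (x - round x)| := Real.abs_sin_le_abs
    _ = Real.pi * |x - round x| := by rw [abs_mul, abs_of_nonneg Real.pi_pos.le]

lemma distT_pos {x : ℝ} (hx : Irrational x) : 0 < distT x := by
  rw [distT, abs_pos, sub_ne_zero]
  exact fun h => (hx ⟨round x, by exact_mod_cast h.symm⟩)

lemma distT_nonneg (x : ℝ) : 0 ≤ distT x := abs_nonneg _

lemma expc_nat_mul (x : ℝ) (n : ℕ) : expc (x * n) = expc x ^ n := by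
  induction n with
  | zero => simpa using expc_zero
  | succ k ih =>
    rw [show x * (k+1 : ℕ) = x * k + x by push_cast; ring, expc_add, ih, pow_succ]

lemma abs_expc (t : ℝ) : ‖expc t‖ = 1 := by
  rw [expc_eq, Complex.norm_exp_ofReal_mul_I]

lemma S_abs_sq (N : ℕ) (x : ℝ) (hx : Real.sin (Real.pi * x) ≠ 0) :
    Complex.normSq (∑ i ∈ Finset.range N, expc (x * ((i : ℝ) + 1))) =
      Real.sin (Real.pi * ((N : ℝ) * x)) ^ 2 / Real.sin (Real.pi * x) ^ 2 := by
  set z := expc x with hz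
  have hz1 : z ≠ 1 := by
    intro h
    have := norm_expc_sub_one x
    rw [← hz, h, sub_self, norm_zero] at this
    have : |Real.sin (Real.pi * x)| = 0 := by linarith
    exact hx (abs_eq_zero.mp this)
  have hsum : ∑ i ∈ Finset.range N, expc (x * ((i : ℝ) + 1)) = z * ((z ^ N - 1) / (z - 1)) := by
    rw [← geom_sum_eq hz1, Finset.mul_sum]
    refine Finset.sum_congr rfl fun i _ => ?_
    rw [show x * ((i : ℝ) + 1) = x * ((i + 1 : ℕ) : ℝ) by push_cast; ring, expc_nat_mul, pow_succ]
    ring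
  have hzN : z ^ N = expc (x * N) := (expc_nat_mul x N).symm
  rw [hsum, ← Complex.sq_norm, norm_mul, abs_expc, one_mul, norm_div, hzN,
    norm_expc_sub_one, norm_expc_sub_one]
  rw [div_pow, mul_pow, mul_pow, sq_abs, sq_abs]
  rw [show x * (N : ℝ) = (N : ℝ) * x by ring]
  have h2 : (2:ℝ)^2 ≠ 0 := by norm_num
  field_simp

lemma key_bound (N : ℕ) (x : ℝ) (hx : Irrational x) :
    4 / Real.pi ^ 2 * (distT ((N : ℝ) * x) / distT x) ^ 2 ≤
      Complex.normSq (∑ i ∈ Finset.range N, expc (x * ((i : ℝ) + 1))) := by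
  have hdx := distT_pos hx
  have hsin_lb := two_distT_le_abs_sin x
  have hsin_ne : Real.sin (Real.pi * x) ≠ 0 := by
    intro h; rw [h, abs_zero] at hsin_lb; linarith
  rw [S_abs_sq N x hsin_ne]
  have hA : (2 * distT ((N:ℝ) * x)) ^ 2 ≤ Real.sin (Real.pi * ((N:ℝ) * x)) ^ 2 := by
    rw [← sq_abs (Real.sin _)]
    have h1 := two_distT_le_abs_sin ((N:ℝ) * x)
    have h0 : 0 ≤ 2 * distT ((N:ℝ) * x) := by have := distT_nonneg ((N:ℝ)*x); linarith
    nlinarith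
  have hB : Real.sin (Real.pi * x) ^ 2 ≤ (Real.pi * distT x) ^ 2 := by
    rw [← sq_abs (Real.sin _)]
    have h1 := abs_sin_le_pi_distT x
    have h0 : 0 ≤ |Real.sin (Real.pi * x)| := abs_nonneg _
    nlinarith
  have hBpos : 0 < Real.sin (Real.pi * x) ^ 2 := by
    positivity
  have hpi := Real.pi_pos
  calc 4 / Real.pi ^ 2 * (distT ((N:ℝ) * x) / distT x) ^ 2
      = (2 * distT ((N:ℝ) * x)) ^ 2 / (Real.pi * distT x) ^ 2 := by
        field_simp; ring
    _ ≤ Real.sin (Real.pi * ((N:ℝ) * x)) ^ 2 / (Real.pi * distT x) ^ 2 := by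
        exact div_le_div_of_nonneg_right hA (by positivity)
    _ ≤ Real.sin (Real.pi * ((N:ℝ) * x)) ^ 2 / Real.sin (Real.pi * x) ^ 2 := by
        exact div_le_div_of_nonneg_left (by positivity) hBpos hB

/-- The deterministic model B matrix: `X_{i,j} = N^{-1/2} e[√2 · i · j²]` for
`1 ≤ i, j ≤ N` (`i : Fin N` corresponds to row `i+1`, etc.). -/
noncomputable def XB (N : ℕ) : Matrix (Fin N) (Fin N) ℂ :=
  fun i j =>
    ((Real.sqrt N : ℝ) : ℂ)⁻¹ *
      expc (Real.sqrt 2 * (((i : ℕ) : ℝ) + 1) * ((((j : ℕ) : ℝ) + 1) ^ 2))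

/-- The associated Hermitian block matrix `H = [[0, X], [X*, 0]]`. -/
noncomputable def HB (N : ℕ) : Matrix (Fin N ⊕ Fin N) (Fin N ⊕ Fin N) ℂ :=
  Matrix.fromBlocks 0 (XB N) (XB N).conjTranspose 0

/-- The fourth moment `μ^{(4)}_N = (1/(2N)) Tr(H⁴)` (a real number). -/
noncomputable def mu4 (N : ℕ) : ℝ := ((2 * (N : ℂ))⁻¹ * (HB N ^ 4).trace).re

lemma trace_H4 (N : ℕ) :
    (HB N ^ 4).trace = 2 * ((XB N * (XB N).conjTranspose) * (XB N * (XB N).conjTranspose)).trace := by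
  have h2 : HB N ^ 2 = Matrix.fromBlocks (XB N * (XB N).conjTranspose) 0 0
      ((XB N).conjTranspose * XB N) := by
    rw [sq, HB, Matrix.fromBlocks_multiply]
    simp
  have h4 : HB N ^ 4 = HB N ^ 2 * HB N ^ 2 := by rw [← pow_add]
  have tb : ∀ (A D : Matrix (Fin N) (Fin N) ℂ), (Matrix.fromBlocks A 0 0 D).trace = A.trace + D.trace := by
    intro A D
    simp [Matrix.trace, Matrix.diag, Fintype.sum_sum_type]
  rw [h4, h2, Matrix.fromBlocks_multiply]
  simp only [Matrix.mul_zero, Matrix.zero_mul, add_zero, zero_add]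
  rw [tb]
  have : ((XB N).conjTranspose * XB N * ((XB N).conjTranspose * XB N)).trace
      = (XB N * (XB N).conjTranspose * (XB N * (XB N).conjTranspose)).trace := by
    rw [← Matrix.mul_assoc, Matrix.trace_mul_comm, ← Matrix.mul_assoc, ← Matrix.mul_assoc,
      Matrix.mul_assoc]
  rw [this]; ring

set_option maxHeartbeats 1000000 in
lemma trace_AA (N : ℕ) :
    ((XB N * (XB N).conjTranspose) * (XB N * (XB N).conjTranspose)).trace
    = (((N : ℂ)) ^ 2)⁻¹ * ∑ j₁ : Fin N, ∑ j₂ : Fin N,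
        ((Complex.normSq (∑ i : Fin N,
          expc ((Real.sqrt 2 * ((((j₁ : ℕ) : ℝ) + 1) ^ 2 - (((j₂ : ℕ) : ℝ) + 1) ^ 2)) *
            (((i : ℕ) : ℝ) + 1)))) : ℂ) := by
  set c : ℂ := ((Real.sqrt N : ℝ) : ℂ)⁻¹ with hc
  have hcc : c * (starRingEnd ℂ) c = ((N : ℂ))⁻¹ := by
    rw [hc, map_inv₀, Complex.conj_ofReal, ← mul_inv, ← Complex.ofReal_mul,
      Real.mul_self_sqrt (Nat.cast_nonneg N)]
    norm_num
  set G : Fin N → Fin N → ℂ := fun i k => ∑ j : Fin N,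
    expc (Real.sqrt 2 * (((i : ℕ) : ℝ) + 1) * ((((j : ℕ) : ℝ) + 1) ^ 2) -
      Real.sqrt 2 * (((k : ℕ) : ℝ) + 1) * ((((j : ℕ) : ℝ) + 1) ^ 2)) with hG
  set u : Fin N → Fin N → Fin N → ℂ := fun j₁ j₂ i =>
    expc ((Real.sqrt 2 * ((((j₁ : ℕ) : ℝ) + 1) ^ 2 - (((j₂ : ℕ) : ℝ) + 1) ^ 2)) *
      (((i : ℕ) : ℝ) + 1)) with hu
  set v : Fin N → Fin N → Fin N → ℂ := fun j₁ j₂ k =>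
    expc (-((Real.sqrt 2 * ((((j₁ : ℕ) : ℝ) + 1) ^ 2 - (((j₂ : ℕ) : ℝ) + 1) ^ 2)) *
      (((k : ℕ) : ℝ) + 1))) with hv
  have hA : ∀ i k, (XB N * (XB N).conjTranspose) i k = (N : ℂ)⁻¹ * G i k := by
    intro i k
    rw [Matrix.mul_apply, hG, Finset.mul_sum]
    refine Finset.sum_congr rfl fun j _ => ?_
    simp only [Matrix.conjTranspose_apply, XB, star_mul', Complex.star_def, map_inv₀,
      Complex.conj_ofReal, conj_expc]
    rw [mul_mul_mul_comm]
    have hcc2 : ((Real.sqrt N : ℝ) : ℂ)⁻¹ * ((Real.sqrt N : ℝ) : ℂ)⁻¹ = (N : ℂ)⁻¹ := by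
      rw [← mul_inv, ← Complex.ofReal_mul, Real.mul_self_sqrt (Nat.cast_nonneg N)]
      norm_num
    rw [hcc2, ← expc_add, ← sub_eq_add_neg]
  have hGprod : ∀ i k : Fin N, G i k * G k i
      = ∑ j₁ : Fin N, ∑ j₂ : Fin N, u j₁ j₂ i * v j₁ j₂ k := by
    intro i k
    rw [hG, Finset.sum_mul_sum]
    refine Finset.sum_congr rfl fun j₁ _ => Finset.sum_congr rfl fun j₂ _ => ?_
    rw [hu, hv]
    simp only
    rw [← expc_add, ← expc_add]
    congr 1
    ring
  have hv_conj : ∀ j₁ j₂ : Fin N, ∑ k : Fin N, v j₁ j₂ k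
      = (starRingEnd ℂ) (∑ i : Fin N, u j₁ j₂ i) := by
    intro j₁ j₂
    rw [map_sum]
    exact Finset.sum_congr rfl fun i _ => by rw [hu, hv]; simp only; rw [conj_expc]
  calc ((XB N * (XB N).conjTranspose) * (XB N * (XB N).conjTranspose)).trace
      = ∑ i : Fin N, ∑ k : Fin N, ((N:ℂ)⁻¹ * G i k) * ((N:ℂ)⁻¹ * G k i) := by
        rw [Matrix.trace]
        refine Finset.sum_congr rfl fun i _ => ?_
        rw [Matrix.diag_apply, Matrix.mul_apply]
        exact Finset.sum_congr rfl fun k _ => by rw [hA, hA]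
    _ = ((N:ℂ)^2)⁻¹ * ∑ i : Fin N, ∑ k : Fin N, G i k * G k i := by
        rw [Finset.mul_sum]
        refine Finset.sum_congr rfl fun i _ => ?_
        rw [Finset.mul_sum]
        refine Finset.sum_congr rfl fun k _ => by rw [sq, mul_inv]; ring
    _ = ((N:ℂ)^2)⁻¹ * ∑ i : Fin N, ∑ k : Fin N, ∑ j₁ : Fin N, ∑ j₂ : Fin N,
          u j₁ j₂ i * v j₁ j₂ k := by
        congr 1
        exact Finset.sum_congr rfl fun i _ => Finset.sum_congr rfl fun k _ => hGprod i k
    _ = ((N:ℂ)^2)⁻¹ * ∑ j₁ : Fin N, ∑ j₂ : Fin N, ∑ i : Fin N, ∑ k : Fin N,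
          u j₁ j₂ i * v j₁ j₂ k := by
        congr 1
        calc ∑ i : Fin N, ∑ k : Fin N, ∑ j₁ : Fin N, ∑ j₂ : Fin N, u j₁ j₂ i * v j₁ j₂ k
            = ∑ i : Fin N, ∑ j₁ : Fin N, ∑ j₂ : Fin N, ∑ k : Fin N, u j₁ j₂ i * v j₁ j₂ k := by
              refine Finset.sum_congr rfl fun i _ => ?_
              rw [Finset.sum_comm]
              exact Finset.sum_congr rfl fun j₁ _ => Finset.sum_comm
          _ = ∑ j₁ : Fin N, ∑ i : Fin N, ∑ j₂ : Fin N, ∑ k : Fin N, u j₁ j₂ i * v j₁ j₂ k :=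
              Finset.sum_comm
          _ = ∑ j₁ : Fin N, ∑ j₂ : Fin N, ∑ i : Fin N, ∑ k : Fin N, u j₁ j₂ i * v j₁ j₂ k :=
              Finset.sum_congr rfl fun j₁ _ => Finset.sum_comm
    _ = (((N : ℂ)) ^ 2)⁻¹ * ∑ j₁ : Fin N, ∑ j₂ : Fin N,
        ((Complex.normSq (∑ i : Fin N, u j₁ j₂ i)) : ℂ) := by
        congr 1
        refine Finset.sum_congr rfl fun j₁ _ => Finset.sum_congr rfl fun j₂ _ => ?_
        rw [← Finset.sum_mul_sum, hv_conj, Complex.mul_conj]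

lemma mu4_eq (N : ℕ) (hN : 1 ≤ N) :
    mu4 N = (((N : ℝ)) ^ 3)⁻¹ * ∑ j₁ ∈ Finset.range N, ∑ j₂ ∈ Finset.range N,
      Complex.normSq (∑ i ∈ Finset.range N,
        expc ((Real.sqrt 2 * (((j₁ : ℝ) + 1) ^ 2 - ((j₂ : ℝ) + 1) ^ 2)) * ((i : ℝ) + 1))) := by
  have hNc : (N : ℂ) ≠ 0 := Nat.cast_ne_zero.mpr (by omega)
  have hNr : (N : ℝ) ≠ 0 := Nat.cast_ne_zero.mpr (by omega)
  rw [mu4, trace_H4, trace_AA]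
  have hfin : (∑ j₁ : Fin N, ∑ j₂ : Fin N,
        ((Complex.normSq (∑ i : Fin N,
          expc ((Real.sqrt 2 * ((((j₁ : ℕ) : ℝ) + 1) ^ 2 - (((j₂ : ℕ) : ℝ) + 1) ^ 2)) *
            (((i : ℕ) : ℝ) + 1)))) : ℂ))
      = ((∑ j₁ ∈ Finset.range N, ∑ j₂ ∈ Finset.range N,
        Complex.normSq (∑ i ∈ Finset.range N,
          expc ((Real.sqrt 2 * (((j₁ : ℝ) + 1) ^ 2 - ((j₂ : ℝ) + 1) ^ 2)) *
            ((i : ℝ) + 1))) : ℝ) : ℂ) := by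
    push_cast
    rw [Fin.sum_univ_eq_sum_range (fun j₁ => ∑ j₂ : Fin N,
      ((Complex.normSq (∑ i : Fin N,
        expc ((Real.sqrt 2 * (((j₁ : ℝ) + 1) ^ 2 - (((j₂ : ℕ) : ℝ) + 1) ^ 2)) *
          (((i : ℕ) : ℝ) + 1)))) : ℂ)) N]
    refine Finset.sum_congr rfl fun j₁ _ => ?_
    rw [Fin.sum_univ_eq_sum_range (fun j₂ =>
      ((Complex.normSq (∑ i : Fin N,
        expc ((Real.sqrt 2 * (((j₁ : ℝ) + 1) ^ 2 - ((j₂ : ℝ) + 1) ^ 2)) *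
          (((i : ℕ) : ℝ) + 1)))) : ℂ)) N]
    refine Finset.sum_congr rfl fun j₂ _ => ?_
    rw [Fin.sum_univ_eq_sum_range (fun i =>
        expc ((Real.sqrt 2 * (((j₁ : ℝ) + 1) ^ 2 - ((j₂ : ℝ) + 1) ^ 2)) *
          ((i : ℝ) + 1))) N]
  rw [hfin]
  set Stot : ℝ := ∑ j₁ ∈ Finset.range N, ∑ j₂ ∈ Finset.range N,
      Complex.normSq (∑ i ∈ Finset.range N,
        expc ((Real.sqrt 2 * (((j₁ : ℝ) + 1) ^ 2 - ((j₂ : ℝ) + 1) ^ 2)) * ((i : ℝ) + 1)))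
  have : (2 * (N : ℂ))⁻¹ * (2 * (((N : ℂ) ^ 2)⁻¹ * (Stot : ℂ)))
      = ((((N : ℝ) ^ 3)⁻¹ * Stot : ℝ) : ℂ) := by
    push_cast
    field_simp
  rw [this, Complex.ofReal_re]
theorem statement10 (N : ℕ) (hN : 1 ≤ N) :
    1 + 4 / (Real.pi ^ 2 * (N : ℝ) ^ 3) *
      ∑ j₁ ∈ Finset.Icc 1 N, ∑ j₂ ∈ Finset.Icc 1 N,
        (if j₁ ≠ j₂ then
          (distT ((N : ℝ) * Real.sqrt 2 * ((j₁ : ℝ) ^ 2 - (j₂ : ℝ) ^ 2)) /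
            distT (Real.sqrt 2 * ((j₁ : ℝ) ^ 2 - (j₂ : ℝ) ^ 2))) ^ 2
        else 0)
      ≤ mu4 N := by
  have hNr : (0 : ℝ) < (N : ℝ) := by exact_mod_cast Nat.pos_of_ne_zero (by omega)
  have hpi := Real.pi_pos
  set T : ℕ → ℕ → ℝ := fun j₁ j₂ => Complex.normSq (∑ i ∈ Finset.range N,
    expc ((Real.sqrt 2 * ((j₁ : ℝ) ^ 2 - (j₂ : ℝ) ^ 2)) * ((i : ℝ) + 1))) with hT
  set r : ℕ → ℕ → ℝ := fun j₁ j₂ =>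
    (distT ((N : ℝ) * Real.sqrt 2 * ((j₁ : ℝ) ^ 2 - (j₂ : ℝ) ^ 2)) /
      distT (Real.sqrt 2 * ((j₁ : ℝ) ^ 2 - (j₂ : ℝ) ^ 2))) ^ 2 with hr
  have hmu : mu4 N = (((N : ℝ)) ^ 3)⁻¹ * ∑ j₁ ∈ Finset.Icc 1 N, ∑ j₂ ∈ Finset.Icc 1 N, T j₁ j₂ := by
    rw [mu4_eq N hN]
    congr 1
    rw [← Finset.Ico_add_one_right_eq_Icc, Finset.sum_Ico_eq_sum_range]
    norm_num
    refine (Finset.sum_congr rfl fun j₁ _ => ?_).symm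
    rw [Finset.sum_Ico_eq_sum_range]
    norm_num
    refine Finset.sum_congr rfl fun j₂ _ => ?_
    rw [hT]
    simp only
    refine congrArg Complex.normSq (Finset.sum_congr rfl fun i _ => ?_)
    congr 1
    push_cast
    ring
  have hbound : ∀ j₁ ∈ Finset.Icc 1 N, ∀ j₂ ∈ Finset.Icc 1 N,
      (if j₁ = j₂ then ((N : ℝ)) ^ 2 else 4 / Real.pi ^ 2 * r j₁ j₂) ≤ T j₁ j₂ := by
    intro j₁ hj₁ j₂ hj₂
    by_cases h : j₁ = j₂
    · subst h
      rw [if_pos rfl, hT]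
      simp only [sub_self, mul_zero, zero_mul, expc_zero, Finset.sum_const,
        Finset.card_range, nsmul_eq_mul, mul_one]
      rw [Complex.normSq_natCast]
      rw [sq]
    · rw [if_neg h]
      set x : ℝ := Real.sqrt 2 * ((j₁ : ℝ) ^ 2 - (j₂ : ℝ) ^ 2) with hx
      have hm : ((j₁ : ℤ) ^ 2 - (j₂ : ℤ) ^ 2) ≠ 0 := by
        intro hc
        apply h
        have h2 : (j₁ : ℤ) ^ 2 = (j₂ : ℤ) ^ 2 := by linarith
        have h3 : j₁ ^ 2 = j₂ ^ 2 := by exact_mod_cast h2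
        exact Nat.pow_left_injective (by norm_num) h3
      have hxirr : Irrational x := by
        have := (irrational_sqrt_two.intCast_mul hm)
        rwa [show ((((j₁ : ℤ) ^ 2 - (j₂ : ℤ) ^ 2 : ℤ)) : ℝ) * Real.sqrt 2 = x by
          rw [hx]; push_cast; ring] at this
      have hk := key_bound N x hxirr
      rw [hT, hr]
      simp only
      rw [show (N : ℝ) * Real.sqrt 2 * ((j₁ : ℝ) ^ 2 - (j₂ : ℝ) ^ 2) = (N : ℝ) * x by
        rw [hx]; ring]
      exact hk
  have hsplit : ∑ j₁ ∈ Finset.Icc 1 N, ∑ j₂ ∈ Finset.Icc 1 N,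
      (if j₁ = j₂ then ((N : ℝ)) ^ 2 else 4 / Real.pi ^ 2 * r j₁ j₂)
      = (N : ℝ) ^ 3 + 4 / Real.pi ^ 2 * ∑ j₁ ∈ Finset.Icc 1 N, ∑ j₂ ∈ Finset.Icc 1 N,
          (if j₁ ≠ j₂ then r j₁ j₂ else 0) := by
    have e1 : ∀ j₁ j₂ : ℕ, (if j₁ = j₂ then ((N : ℝ)) ^ 2 else 4 / Real.pi ^ 2 * r j₁ j₂)
        = (if j₁ = j₂ then ((N : ℝ)) ^ 2 else 0) +
          4 / Real.pi ^ 2 * (if j₁ ≠ j₂ then r j₁ j₂ else 0) := by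
      intro j₁ j₂
      by_cases h : j₁ = j₂ <;> simp [h]
    simp only [e1, Finset.sum_add_distrib, ← Finset.mul_sum]
    congr 1
    have : ∀ j₁ ∈ Finset.Icc 1 N, ∑ j₂ ∈ Finset.Icc 1 N,
        (if j₁ = j₂ then ((N : ℝ)) ^ 2 else 0) = (N : ℝ) ^ 2 := by
      intro j₁ hj₁
      rw [Finset.sum_ite_eq]
      simp [hj₁]
    rw [Finset.sum_congr rfl this, Finset.sum_const, Nat.card_Icc]
    simp only [Nat.add_sub_cancel, nsmul_eq_mul]
    ring
  calc 1 + 4 / (Real.pi ^ 2 * (N : ℝ) ^ 3) *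
      ∑ j₁ ∈ Finset.Icc 1 N, ∑ j₂ ∈ Finset.Icc 1 N, (if j₁ ≠ j₂ then r j₁ j₂ else 0)
      = (((N : ℝ)) ^ 3)⁻¹ * ((N : ℝ) ^ 3 + 4 / Real.pi ^ 2 *
          ∑ j₁ ∈ Finset.Icc 1 N, ∑ j₂ ∈ Finset.Icc 1 N, (if j₁ ≠ j₂ then r j₁ j₂ else 0)) := by
        field_simp
    _ = (((N : ℝ)) ^ 3)⁻¹ * ∑ j₁ ∈ Finset.Icc 1 N, ∑ j₂ ∈ Finset.Icc 1 N,
          (if j₁ = j₂ then ((N : ℝ)) ^ 2 else 4 / Real.pi ^ 2 * r j₁ j₂) := by rw [hsplit]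
    _ ≤ (((N : ℝ)) ^ 3)⁻¹ * ∑ j₁ ∈ Finset.Icc 1 N, ∑ j₂ ∈ Finset.Icc 1 N, T j₁ j₂ := by
        apply mul_le_mul_of_nonneg_left ?_ (by positivity)
        exact Finset.sum_le_sum fun j₁ hj₁ => Finset.sum_le_sum fun j₂ hj₂ =>
          hbound j₁ hj₁ j₂ hj₂
    _ = mu4 N := hmu.symm
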